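/- For the FSCc matrix Z_z = (z, -z·conj(z); 1, -conj(z)) associated to the zero-radius cycle at z ∈ ℂ, and any g ∈ SL(2,ℝ) with cz+d ≠ 0, the similarity transform g·Z_z·g⁻¹ equals a nonzero real scalar multiple of Z_{g·z}, the zero-radius cycle matrix at the Möbius image g·z. -/

import Mathlib

open Complex Matrix

/-- The FSCc matrix of the zero-radius cycle at `z`. -/
def zeroCycle (z : ℂ) : Matrix (Fin 2) (Fin 2) ℂ :=
  !![z, -(z * (starRingEnd ℂ) z); 1, -((starRingEnd ℂ) z)]

/-- Möbius action of a real 2×2 matrix on ℂ. -/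
noncomputable def moebC (g : Matrix (Fin 2) (Fin 2) ℝ) (z : ℂ) : ℂ :=
  ((g 0 0 : ℂ) * z + (g 0 1 : ℂ)) / ((g 1 0 : ℂ) * z + (g 1 1 : ℂ))

theorem zero_radius_cycle_similarity (g : Matrix (Fin 2) (Fin 2) ℝ) (hg : g.det = 1)
    (z : ℂ) (hz : (g 1 0 : ℂ) * z + (g 1 1 : ℂ) ≠ 0) :
    ∃ lam : ℝ, lam ≠ 0 ∧
      (g.map (Complex.ofReal)) * zeroCycle z * (g.map (Complex.ofReal))⁻¹
        = (lam : ℂ) • zeroCycle (moebC g z) := by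
  refine ⟨Complex.normSq ((g 1 0 : ℂ) * z + (g 1 1 : ℂ)),
    fun h => hz (Complex.normSq_eq_zero.mp h), ?_⟩
  have hdet : g 0 0 * g 1 1 - g 0 1 * g 1 0 = 1 := by
    rw [← Matrix.det_fin_two]; exact hg
  have hA : (g.map (Complex.ofReal)).det = 1 := by
    rw [Matrix.det_fin_two]
    simp only [Matrix.map_apply]
    exact_mod_cast congrArg (Complex.ofReal) hdet
  have hinv : (g.map (Complex.ofReal))⁻¹ =
      !![(g 1 1 : ℂ), -(g 0 1 : ℂ); -(g 1 0 : ℂ), (g 0 0 : ℂ)] := by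
    rw [Matrix.inv_def, hA, Matrix.adjugate_fin_two]
    simp [Matrix.map_apply]
  have hcz : ((g 1 0 : ℂ)) * (starRingEnd ℂ z) + (g 1 1 : ℂ) ≠ 0 := by
    intro h
    apply hz
    have := congrArg (starRingEnd ℂ) h
    simpa [map_add, _root_.map_mul, Complex.conj_conj, Complex.conj_ofReal] using this
  rw [hinv]
  have hns : ((Complex.normSq ((g 1 0 : ℂ) * z + (g 1 1 : ℂ)) : ℝ) : ℂ)
      = ((g 1 0 : ℂ) * z + (g 1 1 : ℂ)) * ((g 1 0 : ℂ) * (starRingEnd ℂ z) + (g 1 1 : ℂ)) := by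
    rw [← Complex.mul_conj]
    simp [map_add, _root_.map_mul, Complex.conj_ofReal]
  have hz2 : z * (g 1 0 : ℂ) + (g 1 1 : ℂ) ≠ 0 := by rw [mul_comm]; exact hz
  have hcz2 : (starRingEnd ℂ z) * (g 1 0 : ℂ) + (g 1 1 : ℂ) ≠ 0 := by rw [mul_comm]; exact hcz
  ext i j
  fin_cases i <;> fin_cases j <;>
    simp only [zeroCycle, moebC, Matrix.mul_apply, Fin.sum_univ_two, Matrix.map_apply,
      Matrix.smul_apply, Matrix.cons_val', Matrix.cons_val_zero, Matrix.cons_val_one,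
      Matrix.head_cons, Matrix.head_fin_const, Matrix.empty_val', Matrix.cons_val_fin_one,
      map_div₀, map_add, _root_.map_mul, Complex.conj_ofReal, smul_eq_mul, hns,
        Matrix.of_apply, Fin.zero_eta, Fin.mk_one] <;>
    field_simp <;> ring
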